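/- The truncated leverage function max(1, lev_i(y_i, y_{-i})) is monotonically decreasing in the other agents' strategies: if y_{-i} ≤ y'_{-i} pointwise, then max(1, lev_i(y_i, y_{-i})) ≥ max(1, lev_i(y_i, y'_{-i})). -/

import Mathlib

/-- The truncated leverage `max 1 (lev i y)` is monotonically
decreasing in the other agents' strategies. -/
theorem stmt_0 {N M : Type*} [Fintype N] [Fintype M]
    (x : N → M → ℝ) (aI l : N → ℝ) (α : ℝ)
    (pfun : M → ℝ → ℝ) (p0 : M → ℝ)
    (hx : ∀ i j, x i j ∈ Set.Icc (0:ℝ) 1)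
    (haI : ∀ i, 0 < aI i) (hl : ∀ i, 0 ≤ l i)
    (hα : α ∈ Set.Icc (0:ℝ) 1)
    (hmono : ∀ j, Monotone (pfun j))
    (hpfun0 : ∀ j, pfun j 0 = 0) (hpfun1 : ∀ j, pfun j 1 = p0 j)
    (hp0pos : ∀ j, 0 < p0 j)
    -- model quantities
    (price : (N → ℝ) → M → ℝ)
    (hprice : ∀ y j, price y j = pfun j (∑ i, x i j * y i))
    (a : N → (N → ℝ) → ℝ)
    (ha : ∀ i y, a i y = aI i + y i * ∑ j, x i j * price y j)
    (Δ : N → (N → ℝ) → ℝ)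
    (hΔ : ∀ i y, Δ i y = (1 - y i) * ∑ j, x i j * ((1 - α) * p0 j + α * price y j))
    (e : N → (N → ℝ) → ℝ)
    (he : ∀ i y, e i y = a i y + Δ i y - l i)
    (lev : N → (N → ℝ) → ℝ)
    (hlev : ∀ i y, lev i y = a i y / e i y)
    -- the comparison
    (i : N) (y y' : N → ℝ)
    (hy : ∀ k, y k ∈ Set.Icc (0:ℝ) 1) (hy' : ∀ k, y' k ∈ Set.Icc (0:ℝ) 1)
    (hyi : y i = y' i) (hle : ∀ k, k ≠ i → y k ≤ y' k)
    (hepos : 0 < e i y) (hepos' : 0 < e i y') :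
    max 1 (lev i y') ≤ max 1 (lev i y) := by
  have yle : ∀ k, y k ≤ y' k := by
    intro k
    by_cases hk : k = i
    · subst hk; rw [hyi]
    · exact hle k hk
  have hxnn : ∀ k j, 0 ≤ x k j := fun k j => (hx k j).1
  have hpnn : ∀ j, 0 ≤ price y j := by
    intro j
    rw [hprice]
    have hs : (0:ℝ) ≤ ∑ k, x k j * y k :=
      Finset.sum_nonneg fun k _ => mul_nonneg (hxnn k j) (hy k).1
    have := hmono j hs
    rwa [hpfun0 j] at this
  have hpnn' : ∀ j, 0 ≤ price y' j := by
    intro j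
    rw [hprice]
    have hs : (0:ℝ) ≤ ∑ k, x k j * y' k :=
      Finset.sum_nonneg fun k _ => mul_nonneg (hxnn k j) (hy' k).1
    have := hmono j hs
    rwa [hpfun0 j] at this
  have hple : ∀ j, price y j ≤ price y' j := by
    intro j
    rw [hprice, hprice]
    exact hmono j (Finset.sum_le_sum fun k _ =>
      mul_le_mul_of_nonneg_left (yle k) (hxnn k j))
  have hyi0 : 0 ≤ y i := (hy i).1
  have hyi1 : y i ≤ 1 := (hy i).2
  have hAle : a i y ≤ a i y' := by
    rw [ha, ha, ← hyi]
    refine add_le_add_right (mul_le_mul_of_nonneg_left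
      (Finset.sum_le_sum fun j _ =>
        mul_le_mul_of_nonneg_left (hple j) (hxnn i j)) hyi0) _
  have hApos : 0 < a i y := by
    rw [ha]
    have : (0:ℝ) ≤ y i * ∑ j, x i j * price y j :=
      mul_nonneg hyi0 (Finset.sum_nonneg fun j _ =>
        mul_nonneg (hxnn i j) (hpnn j))
    linarith [haI i]
  have hA'nn : 0 ≤ a i y' := le_of_lt (lt_of_lt_of_le hApos hAle)
  have hΔle : Δ i y ≤ Δ i y' := by
    rw [hΔ, hΔ, ← hyi]
    refine mul_le_mul_of_nonneg_left (Finset.sum_le_sum fun j _ =>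
      mul_le_mul_of_nonneg_left (add_le_add_right
        (mul_le_mul_of_nonneg_left (hple j) hα.1) _) (hxnn i j)) (by linarith)
  rcases le_or_gt (lev i y') 1 with h | h
  · exact max_le (le_max_left _ _) (h.trans (le_max_left _ _))
  · have hea' : e i y' < a i y' := by
      rw [hlev] at h
      exact (one_lt_div hepos').mp h
    have hD' : Δ i y' - l i < 0 := by
      rw [he] at hea'; linarith
    have hlevle : lev i y' ≤ lev i y := by
      rw [hlev, hlev, div_le_div_iff₀ hepos' hepos]
      have hey : e i y = a i y + (Δ i y - l i) := by rw [he]; ring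
      have hey' : e i y' = a i y' + (Δ i y' - l i) := by rw [he]; ring
      rw [hey, hey']
      nlinarith [mul_le_mul_of_nonneg_left (sub_le_sub_right hΔle (l i)) hA'nn,
        mul_le_mul_of_nonpos_right hAle (le_of_lt hD')]
    exact max_le (le_max_left _ _) (hlevle.trans (le_max_right _ _))
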